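/- Let b be a positive integer, λ > 0, κ > 0, and ẑ ∈ ℝ^b with ẑ ≠ 0. Let P_ẑ(ξ) = ⟨ξ, ẑ/‖ẑ‖₂⟩·ẑ/‖ẑ‖₂ denote the orthogonal projection onto the line spanned by ẑ. Then for every ξ₀ ∈ ℝ^b, the point p = (λ/(λ + κ‖ẑ‖₂))·(ξ₀ − P_ẑ(ξ₀)) is the unique minimizer over the subspace {ξ ∈ ℝ^b : ⟨ξ, ẑ⟩ = 0} of the function ξ ↦ (1/(2κ))‖ξ − ξ₀‖₂² + (‖ẑ‖₂/(2λ))‖ξ‖₂². -/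

import Mathlib

open RealInnerProductSpace

theorem stmt_19 {b : ℕ} (hb : 0 < b) (lam kap : ℝ) (hlam : 0 < lam) (hkap : 0 < kap)
    (zh : EuclideanSpace ℝ (Fin b)) (hzh : zh ≠ 0)
    (ξ0 : EuclideanSpace ℝ (Fin b))
    (g : EuclideanSpace ℝ (Fin b) → ℝ)
    (hg : ∀ ξ, g ξ = (1 / (2 * kap)) * ‖ξ - ξ0‖^2 + (‖zh‖ / (2 * lam)) * ‖ξ‖^2)
    (pt : EuclideanSpace ℝ (Fin b))
    (hpt : pt = (lam / (lam + kap * ‖zh‖)) •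
      (ξ0 - (⟪ξ0, ‖zh‖⁻¹ • zh⟫) • (‖zh‖⁻¹ • zh))) :
    ⟪pt, zh⟫ = 0 ∧
    (∀ ξ : EuclideanSpace ℝ (Fin b), ⟪ξ, zh⟫ = 0 → g pt ≤ g ξ) ∧
    (∀ q : EuclideanSpace ℝ (Fin b), ⟪q, zh⟫ = 0 →
      (∀ ξ : EuclideanSpace ℝ (Fin b), ⟪ξ, zh⟫ = 0 → g q ≤ g ξ) → q = pt) := by
  have hz : (0:ℝ) < ‖zh‖ := norm_pos_iff.mpr hzh
  have hD : (0:ℝ) < lam + kap * ‖zh‖ := by positivity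
  set u : EuclideanSpace ℝ (Fin b) := ‖zh‖⁻¹ • zh with hu
  have huz : ⟪u, zh⟫ = ‖zh‖ := by
    rw [hu, real_inner_smul_left, real_inner_self_eq_norm_sq]
    field_simp
  have hP : ⟪ξ0 - (⟪ξ0, u⟫) • u, zh⟫ = 0 := by
    rw [inner_sub_left, real_inner_smul_left, huz, hu, real_inner_smul_right]
    field_simp
    ring
  have hptz : ⟪pt, zh⟫ = 0 := by
    rw [hpt, real_inner_smul_left, hP, mul_zero]
  have hid : lam • ξ0 - (lam + kap * ‖zh‖) • pt = (lam * ⟪ξ0, u⟫) • u := by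
    rw [hpt, smul_smul]
    have : (lam + kap * ‖zh‖) * (lam / (lam + kap * ‖zh‖)) = lam := by
      field_simp
    rw [this, smul_sub, smul_smul]
    abel
  have hortho : ∀ v : EuclideanSpace ℝ (Fin b), ⟪v, zh⟫ = 0 →
      lam * ⟪ξ0, v⟫ = (lam + kap * ‖zh‖) * ⟪pt, v⟫ := by
    intro v hv
    have huv : ⟪u, v⟫ = 0 := by
      rw [hu, real_inner_smul_left, real_inner_comm, hv, mul_zero]
    have h1 : ⟪lam • ξ0 - (lam + kap * ‖zh‖) • pt, v⟫ = 0 := by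
      rw [hid, real_inner_smul_left, huv, mul_zero]
    rw [inner_sub_left, real_inner_smul_left, real_inner_smul_left, sub_eq_zero] at h1
    exact h1
  have key : ∀ ξ : EuclideanSpace ℝ (Fin b), ⟪ξ, zh⟫ = 0 →
      g ξ = g pt + (1/(2*kap) + ‖zh‖/(2*lam)) * ‖ξ - pt‖^2 := by
    intro ξ hξ
    have e1 : lam * ⟪ξ0, ξ⟫ = (lam + kap * ‖zh‖) * ⟪pt, ξ⟫ := hortho ξ hξ
    have e2 : lam * ⟪ξ0, pt⟫ = (lam + kap * ‖zh‖) * ⟪pt, pt⟫ := hortho pt hptz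
    have n1 : ‖ξ - ξ0‖^2 = ‖ξ‖^2 - 2*⟪ξ, ξ0⟫ + ‖ξ0‖^2 := norm_sub_sq_real ξ ξ0
    have n2 : ‖pt - ξ0‖^2 = ‖pt‖^2 - 2*⟪pt, ξ0⟫ + ‖ξ0‖^2 := norm_sub_sq_real pt ξ0
    have n3 : ‖ξ - pt‖^2 = ‖ξ‖^2 - 2*⟪ξ, pt⟫ + ‖pt‖^2 := norm_sub_sq_real ξ pt
    have c1 : ⟪ξ, ξ0⟫ = ⟪ξ0, ξ⟫ := real_inner_comm ξ0 ξ
    have c2 : ⟪pt, ξ0⟫ = ⟪ξ0, pt⟫ := real_inner_comm ξ0 pt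
    have c3 : ⟪ξ, pt⟫ = ⟪pt, ξ⟫ := real_inner_comm pt ξ
    have c4 : ⟪pt, pt⟫ = ‖pt‖^2 := real_inner_self_eq_norm_sq pt
    rw [hg, hg, n1, n2, n3, c1, c2, c3]
    rw [c4] at e2
    set s1 : ℝ := ⟪ξ0, ξ⟫
    set s2 : ℝ := ⟪ξ0, pt⟫
    set s3 : ℝ := ⟪pt, ξ⟫
    field_simp
    linear_combination (2:ℝ) * e2 - (2:ℝ) * e1
  have hA : (0:ℝ) < 1/(2*kap) + ‖zh‖/(2*lam) := by positivity
  refine ⟨hptz, ?_, ?_⟩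
  · intro ξ hξ
    have hk := key ξ hξ
    have h0 : 0 ≤ (1/(2*kap) + ‖zh‖/(2*lam)) * ‖ξ - pt‖^2 := by positivity
    linarith
  · intro q hq hmin
    have h1 := hmin pt hptz
    have h2 := key q hq
    have h3 : (1/(2*kap) + ‖zh‖/(2*lam)) * ‖q - pt‖^2 ≤ 0 := by linarith
    have h4 : 0 ≤ (1/(2*kap) + ‖zh‖/(2*lam)) * ‖q - pt‖^2 := by positivity
    have h5 : ‖q - pt‖^2 = 0 :=
      (mul_eq_zero.mp (le_antisymm h3 h4)).resolve_left (ne_of_gt hA)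
    have h6 : ‖q - pt‖ = 0 := by
      have := sq_eq_zero_iff.mp h5
      exact this
    exact sub_eq_zero.mp (norm_eq_zero.mp h6)
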